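/- (Multisection of generalized Fibonacci numbers.) For all natural numbers m ≥ 1 and j with j ≤ m, the following identity of formal power series over ℝ holds: (1 − L(m)·X + (−b)^m·X²) · ( Σ_{n≥0} F(m·n + j)·Xⁿ ) = F(j) + (−b)^j·F(m−j)·X. -/

import Mathlib

noncomputable def genFib (a b : ℝ) : ℕ → ℝ
  | 0 => 0
  | 1 => 1
  | n + 2 => a * genFib a b (n + 1) + b * genFib a b n

noncomputable def genLuc (a b : ℝ) : ℕ → ℝ
  | 0 => 2
  | 1 => a
  | n + 2 => a * genLuc a b (n + 1) + b * genLuc a b n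

lemma genFib_rec (a b : ℝ) (n : ℕ) :
    genFib a b (n + 2) = a * genFib a b (n + 1) + b * genFib a b n := by
  simp [genFib]

lemma genFib_add (a b : ℝ) : ∀ p q : ℕ, genFib a b (p + q + 1) =
    genFib a b (p + 1) * genFib a b (q + 1) + b * (genFib a b p * genFib a b q)
  | 0, q => by simp [genFib]
  | 1, q => by
      have : 1 + q + 1 = q + 2 := by ring
      rw [this, genFib_rec]
      simp only [genFib]; ring
  | (p+2), q => by
      have h1 := genFib_add a b (p+1) q
      have h2 := genFib_add a b p q
      have e1 : p + 2 + q + 1 = (p + q + 1) + 2 := by ring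
      have e2 : p + q + 1 + 1 = (p + 1) + q + 1 := by ring
      rw [e1, genFib_rec, e2, h1, h2, genFib_rec a b (p+1), genFib_rec a b p]
      ring

lemma genLuc_eq (a b : ℝ) : ∀ d : ℕ, genLuc a b (d + 1) =
    genFib a b (d + 2) + b * genFib a b d
  | 0 => by simp [genLuc, genFib]
  | 1 => by simp [genLuc, genFib]; ring
  | (d+2) => by
      have h1 := genLuc_eq a b (d+1)
      have h2 := genLuc_eq a b d
      show genLuc a b (d + 1 + 2) = _
      rw [genLuc, h1, h2, genFib_rec a b (d+2), genFib_rec a b d]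
      ring

lemma genFib_catalan (a b : ℝ) : ∀ (q k : ℕ),
    genFib a b (k + q) * genFib a b (q + 1) - genFib a b (k + q + 1) * genFib a b q
      = (-b) ^ q * genFib a b k
  | 0, k => by simp [genFib]
  | (q+1), k => by
      have h := genFib_catalan a b q k
      have e : k + (q + 1) = (k + q) + 1 := by ring
      rw [e, genFib_rec a b q, genFib_rec a b (k + q)]
      have : (-b)^(q+1) * genFib a b k = (-b) * ((-b)^q * genFib a b k) := by ring
      rw [this, ← h]; ring

lemma claimB (a b : ℝ) (s k : ℕ) :
    genFib a b (k + 2 * (s + 1)) =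
      genLuc a b (s + 1) * genFib a b (k + (s + 1)) - (-b) ^ (s + 1) * genFib a b k := by
  have hadd := genFib_add a b (k + (s + 1)) s
  have hcat := genFib_catalan a b (s + 1) k
  have hluc := genLuc_eq a b s
  have e1 : k + 2 * (s + 1) = k + (s + 1) + s + 1 := by ring
  have e2 : k + (s + 1) + 1 = k + (s + 1 + 1) := by ring
  rw [e1, hadd, hluc]
  have e3 : k + (s + 1) + 1 = k + (s + 1) + 1 := rfl
  nlinarith [hcat]

lemma claimA (a b : ℝ) (m j : ℕ) (hm : 1 ≤ m) (hj : j ≤ m) :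
    genFib a b (m + j) =
      genLuc a b m * genFib a b j + (-b) ^ j * genFib a b (m - j) := by
  obtain ⟨d, rfl⟩ : ∃ d, m = j + d := ⟨m - j, by omega⟩
  have hd : j + d - j = d := by omega
  rw [hd]
  match j with
  | 0 => simp [genFib]
  | (i+1) =>
      have hadd := genFib_add a b (i + 1 + d) i
      have hcat := genFib_catalan a b (i + 1) d
      have hluc := genLuc_eq a b (d + i)
      have e0 : i + 1 + d = d + i + 1 := by ring
      have e1 : i + 1 + d + i + 1 = i + 1 + d + (i + 1) := by ring
      rw [← e1, hadd, e0, hluc]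
      have r1 := genFib_rec a b (d + i)
      have r2 := genFib_rec a b i
      have ec : d + (i + 1) = d + i + 1 := by ring
      have ec2 : i + 1 + 1 = i + 2 := rfl
      have ec3 : d + i + 1 + 1 = d + i + 2 := rfl
      rw [ec, ec2, ec3] at hcat
      rw [show d + i + 1 + 1 = d + i + 2 from rfl]
      linear_combination hcat - genFib a b (d+i+1) * r2 + genFib a b (i+1) * r1

open PowerSeries in
theorem genFib_multisection (a b : ℝ) (m j : ℕ) (hm : 1 ≤ m) (hj : j ≤ m) :
    (1 - C (genLuc a b m) * X + C ((-b) ^ m) * X ^ 2) *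
        PowerSeries.mk (fun n => genFib a b (m * n + j)) =
      C (genFib a b j) + C ((-b) ^ j * genFib a b (m - j)) * X := by
  set S : ℝ⟦X⟧ := PowerSeries.mk (fun n => genFib a b (m * n + j)) with hS
  have expand : (1 - C (genLuc a b m) * X + C ((-b) ^ m) * X ^ 2) * S =
      S - C (genLuc a b m) * (S * X) + C ((-b) ^ m) * ((S * X) * X) := by ring
  rw [expand]
  ext n
  match n with
  | 0 =>
      simp [hS, coeff_zero_mul_X, coeff_mk]
  | 1 =>
      simp only [map_add, map_sub, coeff_C_mul, coeff_succ_mul_X, coeff_zero_mul_X,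
        coeff_mk, coeff_C, coeff_one]
      norm_num
      have hA := claimA a b m j hm hj
      simp only [hS, coeff_mk, constantCoeff_mk]
      rw [show m * 1 + j = m + j from by ring, show m * 0 + j = j from by ring]
      linarith [hA]
  | (n+2) =>
      simp only [map_add, map_sub, coeff_C_mul, coeff_succ_mul_X, coeff_mk, coeff_C, coeff_one]
      norm_num
      obtain ⟨s, rfl⟩ : ∃ s, m = s + 1 := ⟨m - 1, by omega⟩
      have hB := claimB a b s (((s+1)) * n + j)
      have e1 : (s + 1) * n + j + 2 * (s + 1) = (s + 1) * (n + 2) + j := by ring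
      have e2 : (s + 1) * n + j + (s + 1) = (s + 1) * (n + 1) + j := by ring
      rw [e1, e2] at hB
      simp only [hS, coeff_mk]
      linarith [hB]
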